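/- arXiv:1612.08229 — 2 statements merged into one kernel-verified Lean document; each statement's English description precedes it below -/
import Mathlib

section
/- For a finite abstract simplicial complex G, let f(G) denote the number of odd-dimensional simplices (sets of even cardinality) in G, and let A be the adjacency matrix of the connection graph G' (vertices are the simplices of G, two distinct simplices adjacent iff they intersect). Then det(1+A) = (-1)^{f(G)}. -/
open Finset Matrix

/-- Unimodularity theorem: for a finite abstract simplicial complex `G`
(a collection of nonempty finsets closed under nonempty subsets), the
Fredholm determinant `det (1 + A(G'))` of the connection graph equals
`(-1)^(f G)` where `f G` is the number of odd-dimensional (even cardinality)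
simplices. The matrix below is exactly `1 + A(G')`: its `(x,y)` entry is `1`
iff the simplices `x` and `y` intersect (in particular the diagonal is `1`). -/
theorem unimodularity {V : Type*} [Fintype V] [DecidableEq V]
    (G : Finset (Finset V))
    (hne : ∀ x ∈ G, x.Nonempty)
    (hclosed : ∀ x ∈ G, ∀ y ⊆ x, y.Nonempty → y ∈ G) :
    Matrix.det (Matrix.of fun x y : {z // z ∈ G} =>
        if ((x : Finset V) ∩ (y : Finset V)).Nonempty then (1 : ℤ) else 0)
      = (-1) ^ (G.filter fun x => Even x.card).card := by
  classical
  set F : Matrix {z // z ∈ G} {z // z ∈ G} ℤ :=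
    Matrix.of fun x t => if (t : Finset V) ⊆ (x : Finset V) then 1 else 0 with hF
  set D : Matrix {z // z ∈ G} {z // z ∈ G} ℤ :=
    Matrix.diagonal fun t => (-1) ^ ((t : Finset V).card + 1) with hD
  have key : (Matrix.of fun x y : {z // z ∈ G} =>
      if ((x : Finset V) ∩ (y : Finset V)).Nonempty then (1 : ℤ) else 0) = F * D * Fᵀ := by
    ext x y
    have hxy : ∀ t : {z // z ∈ G}, (F * D) x t * Fᵀ t y
        = if (t : Finset V) ⊆ (x : Finset V) ∩ (y : Finset V)
            then (-1) ^ ((t : Finset V).card + 1) else 0 := by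
      intro t
      simp only [hF, hD, Matrix.mul_diagonal, Matrix.transpose_apply, Matrix.of_apply,
        subset_inter_iff]
      by_cases h1 : (t : Finset V) ⊆ (x : Finset V) <;>
        by_cases h2 : (t : Finset V) ⊆ (y : Finset V) <;> simp [h1, h2]
    rw [Matrix.mul_apply]
    simp only [hxy]
    rw [Finset.univ_eq_attach,
      Finset.sum_attach G (fun t => if t ⊆ (x : Finset V) ∩ (y : Finset V)
        then (-1 : ℤ) ^ (t.card + 1) else 0), ← Finset.sum_filter]
    have hfilt : G.filter (fun t => t ⊆ (x : Finset V) ∩ (y : Finset V))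
        = ((x : Finset V) ∩ (y : Finset V)).powerset.filter (fun t => t ≠ ∅) := by
      ext t
      simp only [mem_filter, mem_powerset, Ne]
      constructor
      · rintro ⟨htG, hts⟩
        exact ⟨hts, by simpa [← Finset.nonempty_iff_ne_empty] using hne t htG⟩
      · rintro ⟨hts, htne⟩
        refine ⟨hclosed x x.2 t (hts.trans inter_subset_left) ?_, hts⟩
        exact Finset.nonempty_iff_ne_empty.2 htne
    rw [hfilt, Finset.filter_ne',
      Finset.sum_erase_eq_sub (Finset.empty_mem_powerset _)]
    simp only [pow_succ]
    rw [← Finset.sum_mul, Finset.sum_powerset_neg_one_pow_card]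
    rcases Finset.eq_empty_or_nonempty ((x : Finset V) ∩ (y : Finset V)) with h | h
    · simp [h, Matrix.of_apply]
    · simp [h, Finset.nonempty_iff_ne_empty.1 h, Matrix.of_apply]
  rw [key, Matrix.det_mul, Matrix.det_mul, Matrix.det_transpose]
  have hFdet : F.det = 1 := by
    rw [← Matrix.det_transpose]
    have hbt : Fᵀ.BlockTriangular (fun t : {z // z ∈ G} => (t : Finset V).card) := by
      intro i j hij
      simp only [hF, Matrix.transpose_apply, Matrix.of_apply]
      rw [if_neg]
      intro hsub
      exact absurd (Finset.card_le_card hsub) (not_le.2 hij)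
    rw [hbt.det]
    refine Finset.prod_eq_one fun a _ => ?_
    have : Fᵀ.toSquareBlock (fun t : {z // z ∈ G} => (t : Finset V).card) a = 1 := by
      ext i j
      simp only [Matrix.toSquareBlock_def, hF, Matrix.transpose_apply, Matrix.of_apply,
        Matrix.one_apply]
      by_cases hij : i = j
      · simp [hij]
      · rw [if_neg, if_neg hij]
        intro hsub
        have := Finset.eq_of_subset_of_card_le hsub (le_of_eq (j.2.trans i.2.symm))
        exact hij (Subtype.ext (Subtype.ext this))
    rw [this, Matrix.det_one]
  rw [hFdet, hD, Matrix.det_diagonal]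
  have hval : ∀ t : {z // z ∈ G}, ((-1 : ℤ)) ^ ((t : Finset V).card + 1)
      = if Even (t : Finset V).card then -1 else 1 := by
    intro t
    rcases Nat.even_or_odd (t : Finset V).card with h | h
    · simp [h, pow_succ, h.neg_one_pow]
    · simp [h, pow_succ, h.neg_one_pow, Nat.not_even_iff_odd.2 h]
  simp only [hval]
  rw [Finset.prod_ite, Finset.prod_const, Finset.prod_const, one_pow, mul_one,
    Finset.univ_eq_attach]
  have hcard : (G.attach.filter fun x : {z // z ∈ G} => Even x.1.card).card
      = (G.filter fun x => Even x.card).card := by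
    rw [Finset.filter_attach (fun t : Finset V => Even t.card) G, Finset.card_map,
      Finset.card_attach]
  rw [hcard]; ring
end

section
/- For any finite abstract simplicial complex G, the Fredholm characteristic psi(G) = det(1+A(G')) is either 1 or -1; in particular the Fredholm matrix 1+A(G') is unimodular and its inverse is an integer matrix. -/
open Finset Matrix

private lemma sum_nonempty_powerset {V : Type*} [DecidableEq V] (s : Finset V) :
    ∑ z ∈ s.powerset.filter (fun t => t.Nonempty), (-1:ℤ)^(z.card+1)
      = if s.Nonempty then 1 else 0 := by
  have h0 : ∑ z ∈ s.powerset, (-1:ℤ)^(z.card+1)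
      = -(if s = ∅ then 1 else 0) := by
    simp only [pow_succ, ← Finset.sum_mul, Finset.sum_powerset_neg_one_pow_card]
    ring
  have h1 := Finset.sum_filter_add_sum_filter_not s.powerset (fun t => t.Nonempty)
      (fun z => (-1:ℤ)^(z.card+1))
  have h2 : s.powerset.filter (fun t => ¬ t.Nonempty) = {∅} := by
    ext t
    simp [Finset.not_nonempty_iff_eq_empty]
    rintro rfl; exact Finset.empty_subset s
  rw [h2] at h1
  simp only [Finset.sum_singleton, Finset.card_empty, pow_one] at h1
  have h3 := h1.trans h0
  norm_num at h3
  rcases s.eq_empty_or_nonempty with rfl | hs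
  · rw [if_pos rfl] at h3
    have hz : ∑ x ∈ Finset.filter (fun x => x.Nonempty) (∅:Finset V).powerset,
        (-1:ℤ)^(x.card+1) = 0 := by linarith
    simpa using hz
  · rw [if_neg (Finset.nonempty_iff_ne_empty.mp hs)] at h3
    rw [if_pos hs]
    linarith

/-- For any finite abstract simplicial complex `G`, the Fredholm characteristic
`psi G = det (1 + A(G'))` of the connection graph is `1` or `-1`; in particular
the Fredholm matrix `1 + A(G')` is unimodular (a unit in the ring of integer
matrices, hence with integer inverse). -/
theorem fredholm_unimodular {V : Type*} [Fintype V] [DecidableEq V]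
    (G : Finset (Finset V))
    (hne : ∀ x ∈ G, x.Nonempty)
    (hclosed : ∀ x ∈ G, ∀ y ⊆ x, y.Nonempty → y ∈ G) :
    (Matrix.det (Matrix.of fun x y : {z // z ∈ G} =>
        if ((x : Finset V) ∩ (y : Finset V)).Nonempty then (1 : ℤ) else 0) = 1 ∨
     Matrix.det (Matrix.of fun x y : {z // z ∈ G} =>
        if ((x : Finset V) ∩ (y : Finset V)).Nonempty then (1 : ℤ) else 0) = -1) ∧
    IsUnit (Matrix.of fun x y : {z // z ∈ G} =>
        if ((x : Finset V) ∩ (y : Finset V)).Nonempty then (1 : ℤ) else 0) := by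
  classical
  set L : Matrix {z // z ∈ G} {z // z ∈ G} ℤ :=
    Matrix.of fun x y : {z // z ∈ G} =>
      if ((x : Finset V) ∩ (y : Finset V)).Nonempty then (1 : ℤ) else 0 with hLdef
  set A : Matrix {z // z ∈ G} {z // z ∈ G} ℤ :=
    Matrix.of fun x z : {z // z ∈ G} =>
      if (z : Finset V) ⊆ (x : Finset V) then (1 : ℤ) else 0 with hAdef
  set D : Matrix {z // z ∈ G} {z // z ∈ G} ℤ :=
    Matrix.diagonal (fun z : {z // z ∈ G} => (-1:ℤ)^((z : Finset V).card + 1)) with hDdef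
  -- factorization L = A * D * Aᵀ
  have hfact : L = A * D * Aᵀ := by
    ext x y
    have hentry : (A * D * Aᵀ) x y
        = ∑ z : {z // z ∈ G},
            if (z : Finset V) ⊆ (x : Finset V) ∩ (y : Finset V)
            then (-1:ℤ)^((z : Finset V).card + 1) else 0 := by
      simp only [Matrix.mul_apply, Matrix.transpose_apply, hAdef, hDdef,
        Matrix.diagonal, Matrix.of_apply]
      rw [Finset.sum_congr rfl]
      intro z _
      rw [Finset.sum_eq_single z]
      · by_cases h1 : (z : Finset V) ⊆ (x : Finset V) <;>
          by_cases h2 : (z : Finset V) ⊆ (y : Finset V) <;>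
          simp [h1, h2, Finset.subset_inter_iff]
      · intro w _ hw; simp [Matrix.of_apply, hw]
      · intro h; exact absurd (Finset.mem_univ z) h
    rw [hentry]
    have hsum : (∑ z : {z // z ∈ G},
            if (z : Finset V) ⊆ (x : Finset V) ∩ (y : Finset V)
            then (-1:ℤ)^((z : Finset V).card + 1) else 0)
        = ∑ z ∈ G.filter (fun z => z ⊆ (x : Finset V) ∩ (y : Finset V)),
            (-1:ℤ)^(z.card + 1) := by
      rw [Finset.sum_filter]
      exact Finset.sum_coe_sort G
        (fun z => if z ⊆ ((x : Finset V) ∩ (y : Finset V)) then (-1:ℤ)^(z.card+1) else 0)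
    rw [hsum]
    have hset : G.filter (fun z => z ⊆ (x : Finset V) ∩ (y : Finset V))
        = ((x : Finset V) ∩ (y : Finset V)).powerset.filter (fun t => t.Nonempty) := by
      ext t
      simp only [Finset.mem_filter, Finset.mem_powerset]
      constructor
      · rintro ⟨htG, hts⟩; exact ⟨hts, hne t htG⟩
      · rintro ⟨hts, htne⟩
        exact ⟨hclosed x x.2 t (hts.trans (Finset.inter_subset_left)) htne, hts⟩
    rw [hset, sum_nonempty_powerset]
    simp [hLdef]
  -- determinant of A is 1
  have hA_tri : A.BlockTriangular (fun z : {z // z ∈ G} => OrderDual.toDual (z : Finset V).card) := by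
    intro i j hij
    have : ¬ (j : Finset V) ⊆ (i : Finset V) := by
      intro hsub
      exact absurd (Finset.card_le_card hsub) (not_le.mpr hij)
    simp [hAdef, this]
    exact this
  have hdetA : A.det = 1 := by
    rw [hA_tri.det]
    refine Finset.prod_eq_one ?_
    intro a _
    have hblock : A.toSquareBlock (fun z : {z // z ∈ G} => OrderDual.toDual (z : Finset V).card) a
        = 1 := by
      ext i j
      simp only [Matrix.toSquareBlock_def, hAdef, Matrix.of_apply, Matrix.one_apply]
      by_cases h : ((j : {z // z ∈ G}) : Finset V) ⊆ ((i : {z // z ∈ G}) : Finset V)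
      · have hcard : ((j : {z // z ∈ G}) : Finset V).card
            = ((i : {z // z ∈ G}) : Finset V).card := by
          have h1 := i.2
          have h2 := j.2
          simpa using h2.trans h1.symm
        have : ((j : {z // z ∈ G}) : Finset V) = ((i : {z // z ∈ G}) : Finset V) :=
          Finset.eq_of_subset_of_card_le h (le_of_eq hcard.symm)
        have hij : i = j := by
          apply Subtype.ext; apply Subtype.ext; exact this.symm
        simp [h, hij]
      · have hij : i ≠ j := by
          rintro rfl; exact h (subset_refl _)
        simp [h, hij]
    rw [hblock, Matrix.det_one]
  have hdetD : D.det = (-1:ℤ)^(∑ z : {z // z ∈ G}, ((z : Finset V).card + 1)) := by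
    rw [hDdef, Matrix.det_diagonal, ← Finset.prod_pow_eq_pow_sum]
  have hdetL : L.det = (-1:ℤ)^(∑ z : {z // z ∈ G}, ((z : Finset V).card + 1)) := by
    rw [hfact, Matrix.det_mul, Matrix.det_mul, Matrix.det_transpose, hdetA, hdetD]
    ring
  have hor : L.det = 1 ∨ L.det = -1 := by
    rw [hdetL]; exact neg_one_pow_eq_or ℤ _
  refine ⟨hor, ?_⟩
  rw [Matrix.isUnit_iff_isUnit_det]
  rcases hor with h | h <;> rw [h]
  · exact isUnit_one
  · exact isUnit_one.neg
end
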